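/- Let g be a symmetric positive definite n×n real matrix and B a skew-symmetric n×n real matrix, and G = [[-g⁻¹B, g⁻¹],[g - B g⁻¹ B, B g⁻¹]]. Then the +1-eigenspace of G equals {(X, BX + gX) : X ∈ ℝⁿ}, i.e. the graph of B + g. -/
import Mathlib


open Matrix

theorem generalized_metric_plus_eigenspace {n : ℕ}
    (g B : Matrix (Fin n) (Fin n) ℝ)
    (hg : g.PosDef) (hB : Bᵀ = -B) :
    let G : Matrix (Fin n ⊕ Fin n) (Fin n ⊕ Fin n) ℝ :=
      Matrix.fromBlocks (-(g⁻¹ * B)) g⁻¹ (g - B * g⁻¹ * B) (B * g⁻¹)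
    {v : Fin n ⊕ Fin n → ℝ | G.mulVec v = v} =
      {v : Fin n ⊕ Fin n → ℝ | ∃ X : Fin n → ℝ, v = Sum.elim X ((B + g).mulVec X)} := by
  intro G
  have hdet : IsUnit g.det := isUnit_iff_ne_zero.mpr hg.det_pos.ne'
  have hgi : g⁻¹ * g = 1 := nonsing_inv_mul g hdet
  have hig : g * g⁻¹ = 1 := mul_nonsing_inv g hdet
  ext v
  simp only [Set.mem_setOf_eq]
  constructor
  · intro h
    set x : Fin n → ℝ := v ∘ Sum.inl with hx
    set y : Fin n → ℝ := v ∘ Sum.inr with hy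
    have hv : v = Sum.elim x y := by ext (i | i) <;> rfl
    rw [hv, fromBlocks_mulVec] at h
    have e1 : (-(g⁻¹ * B)).mulVec x + g⁻¹.mulVec y = x := funext fun i => congrFun h (Sum.inl i)
    -- multiply e1 by g
    have e1' : g.mulVec ((-(g⁻¹ * B)).mulVec x + g⁻¹.mulVec y) = g.mulVec x := by rw [e1]
    rw [mulVec_add, mulVec_mulVec, mulVec_mulVec, Matrix.mul_neg, ← Matrix.mul_assoc,
      hig, Matrix.one_mul] at e1'
    have hyx : y = (B + g).mulVec x := by
      rw [neg_mulVec, one_mulVec] at e1'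
      rw [add_mulVec, ← e1']
      abel
    refine ⟨x, ?_⟩
    rw [hv, hyx]
  · rintro ⟨X, rfl⟩
    show G.mulVec _ = _
    rw [fromBlocks_mulVec]
    simp only [Sum.elim_comp_inl, Sum.elim_comp_inr]
    have h1 : (-(g⁻¹ * B)).mulVec X + g⁻¹.mulVec ((B + g).mulVec X) = X := by
      rw [mulVec_mulVec, Matrix.mul_add, hgi, ← add_mulVec, neg_add_cancel_left, one_mulVec]
    have h2 : (g - B * g⁻¹ * B).mulVec X + (B * g⁻¹).mulVec ((B + g).mulVec X)
        = (B + g).mulVec X := by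
      rw [mulVec_mulVec, Matrix.mul_add, Matrix.mul_assoc B g⁻¹ g, hgi, Matrix.mul_one,
        ← add_mulVec]
      congr 1
      abel
    rw [h1, h2]
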